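/- Let (W,S) be a Coxeter system, H ⊆ S, s,t ∈ S, and x ∈ ^{{s,t}}W. Then the intersection (W_{{s,t}}·x) ∩ W^H is one of the following five sets: (1) the empty set; (2) the singleton {x}; (3) {g·x : g ∈ W_{{s,t}}, t is not a right descent of g}; (4) {g·x : g ∈ W_{{s,t}}, s is not a right descent of g}; (5) the whole coset W_{{s,t}}·x. -/

import Mathlib

open Polynomial

namespace CIKL

variable {B : Type*} {W : Type*} [Group W] {M : CoxeterMatrix B}

/-- The Bruhat order on a Coxeter group: the reflexive-transitive closure of the
Bruhat graph, which has a directed edge from `a` to `b` whenever `b = a * t` for a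
reflection `t` and `ℓ(a) < ℓ(b)`. -/
def bruhatLE (cs : CoxeterSystem M W) (u v : W) : Prop :=
  Relation.ReflTransGen
    (fun a b => ∃ t, cs.IsReflection t ∧ b = a * t ∧ cs.length a < cs.length b) u v

/-- Strict Bruhat order. -/
def bruhatLT (cs : CoxeterSystem M W) (u v : W) : Prop :=
  bruhatLE cs u v ∧ u ≠ v

/-- The cover relation `u ⊲ v` of the Bruhat order. -/
def bruhatCovBy (cs : CoxeterSystem M W) (u v : W) : Prop :=
  bruhatLT cs u v ∧ ∀ z, bruhatLE cs u z → bruhatLE cs z v → z = u ∨ z = v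

/-- `W^H`: minimal left coset representatives, `{w : ℓ(wh) > ℓ(w) for all h ∈ H}`. -/
def minRep (cs : CoxeterSystem M W) (H : Set B) : Set W :=
  {w | ∀ h ∈ H, cs.length w < cs.length (w * cs.simple h)}

/-- `^J W`: minimal right coset representatives, `{w : ℓ(rw) > ℓ(w) for all r ∈ J}`. -/
def minRepLeft (cs : CoxeterSystem M W) (J : Set B) : Set W :=
  {w | ∀ h ∈ J, cs.length w < cs.length (cs.simple h * w)}

/-- The standard parabolic (dihedral) subgroup `W_{{s,t}}`. -/
def stSubgroup (cs : CoxeterSystem M W) (s t : B) : Subgroup W :=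
  Subgroup.closure {cs.simple s, cs.simple t}

/-- The defining recurrence of the parabolic Kazhdan–Lusztig `R`-polynomials
`R^{H,x}_{u,v}` of Deodhar, for `x ∈ {-1, q}`. -/
def IsRFamily (cs : CoxeterSystem M W) (H : Set B) (x : Polynomial ℤ)
    (R : W → W → Polynomial ℤ) : Prop :=
  (∀ u v, u ∈ minRep cs H → v ∈ minRep cs H → ¬ bruhatLE cs u v → R u v = 0) ∧
  (∀ u, u ∈ minRep cs H → R u u = 1) ∧
  (∀ u v, u ∈ minRep cs H → v ∈ minRep cs H → bruhatLT cs u v →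
    ∀ i : B, cs.length (cs.simple i * v) < cs.length v →
      ((cs.length (cs.simple i * u) < cs.length u →
          R u v = R (cs.simple i * u) (cs.simple i * v)) ∧
       (cs.length u < cs.length (cs.simple i * u) → cs.simple i * u ∈ minRep cs H →
          R u v = (X - 1) * R u (cs.simple i * v)
            + X * R (cs.simple i * u) (cs.simple i * v)) ∧
       (cs.length u < cs.length (cs.simple i * u) → cs.simple i * u ∉ minRep cs H →
          R u v = (X - 1 - x) * R u (cs.simple i * v))))

/-- The defining recurrence of the ordinary Kazhdan–Lusztig `R`-polynomials. -/
def IsOrdRFamily (cs : CoxeterSystem M W) (R : W → W → Polynomial ℤ) : Prop :=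
  (∀ u v, ¬ bruhatLE cs u v → R u v = 0) ∧
  (∀ u, R u u = 1) ∧
  (∀ u v, bruhatLT cs u v →
    ∀ i : B, cs.length (cs.simple i * v) < cs.length v →
      ((cs.length (cs.simple i * u) < cs.length u →
          R u v = R (cs.simple i * u) (cs.simple i * v)) ∧
       (cs.length u < cs.length (cs.simple i * u) →
          R u v = (X - 1) * R u (cs.simple i * v)
            + X * R (cs.simple i * u) (cs.simple i * v))))

/-- The defining properties of the parabolic Kazhdan–Lusztig polynomials
`P^{H,x}_{u,v}`, relative to a given family `R` of parabolic `R`-polynomials. -/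
def IsPFamily (cs : CoxeterSystem M W) (H : Set B) (R P : W → W → Polynomial ℤ) : Prop :=
  (∀ u v, u ∈ minRep cs H → v ∈ minRep cs H → ¬ bruhatLE cs u v → P u v = 0) ∧
  (∀ u, u ∈ minRep cs H → P u u = 1) ∧
  (∀ u v, u ∈ minRep cs H → v ∈ minRep cs H → bruhatLT cs u v →
    2 * (P u v).degree + 1 ≤ ((cs.length v - cs.length u : ℕ) : WithBot ℕ)) ∧
  (∀ u v, u ∈ minRep cs H → v ∈ minRep cs H →
    (P u v).reflect (cs.length v - cs.length u) =
      ∑ᶠ z ∈ {z | bruhatLE cs u z ∧ bruhatLE cs z v ∧ z ∈ minRep cs H},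
        R u z * P z v)

/-- A special matching of `w`: an involution of the lower Bruhat interval `[e,w]`
which matches each element to an element covering it or covered by it, and such
that `u₁ ⊲ u₂` and `M u₁ ≠ u₂` imply `M u₁ ≤ M u₂`. -/
def IsSpecialMatching (cs : CoxeterSystem M W) (w : W) (Mm : W → W) : Prop :=
  (∀ u, bruhatLE cs u w → bruhatLE cs (Mm u) w) ∧
  (∀ u, bruhatLE cs u w → Mm (Mm u) = u) ∧
  (∀ u, bruhatLE cs u w → bruhatCovBy cs u (Mm u) ∨ bruhatCovBy cs (Mm u) u) ∧
  (∀ u₁ u₂, bruhatLE cs u₁ w → bruhatLE cs u₂ w → bruhatCovBy cs u₁ u₂ →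
    Mm u₁ ≠ u₂ → bruhatLE cs (Mm u₁) (Mm u₂))

/-- An `H`-special matching of `w`: a special matching `M` of `[e,w]` such that
`u ∈ [e,w]^H` and `M u ⊲ u` imply `M u ∈ W^H`. -/
def IsHSpecialMatching (cs : CoxeterSystem M W) (H : Set B) (w : W) (Mm : W → W) : Prop :=
  IsSpecialMatching cs w Mm ∧
  (∀ u, bruhatLE cs u w → u ∈ minRep cs H → bruhatCovBy cs (Mm u) u →
    Mm u ∈ minRep cs H)

/-- The polynomials `R_i` of Lemma 2 (`ricorsioni`):
`R_i = (q-1) ∑_{k=0}^{i-1} (-1)^k q^k` for `i` odd and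
`R_i = (q-1)² ∑_{k=0}^{(i-2)/2} q^{2k}` for `i` even. -/
noncomputable def seqR (i : ℕ) : Polynomial ℤ :=
  if Odd i then (X - 1) * ∑ k ∈ Finset.range i, (-1) ^ k * X ^ k
  else (X - 1) ^ 2 * ∑ k ∈ Finset.range (i / 2), X ^ (2 * k)

section Aux

open CoxeterSystem List

variable {B : Type*} {W : Type*} [Group W] {M : CoxeterMatrix B} (cs : CoxeterSystem M W)

local prefix:100 "σ" => cs.simple
local prefix:100 "ℓ" => cs.length
local prefix:100 "π" => cs.wordProd


private theorem togAux (i : B) :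
    Function.Involutive (fun p : W × ℤˣ =>
      (σ i * p.1 * σ i, haveI := Classical.decEq W
        if p.1 = σ i then -p.2 else p.2)) := by
  intro ⟨w, ε⟩
  simp only [Prod.mk.injEq]
  constructor
  · simp only [mul_assoc, cs.simple_mul_simple_cancel_left, cs.simple_mul_simple_self, mul_one]
  · by_cases h : w = σ i
    · subst h
      rw [if_pos (by rw [cs.simple_mul_simple_self]; group), if_pos rfl, neg_neg]
    · rw [if_neg h, if_neg (by
        intro hc
        apply h
        have := congrArg (fun z => σ i * z * σ i) hc
        simpa [mul_assoc, cs.simple_mul_simple_cancel_left,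
          cs.simple_mul_simple_cancel_right] using this)]

/-- The permutation of `W × ℤˣ` associated to a simple reflection. -/
noncomputable def tog (i : B) : Equiv.Perm (W × ℤˣ) :=
  Function.Involutive.toPerm _ (togAux cs i)

theorem tog_apply_eq (i : B) (ε : ℤˣ) : tog cs i (σ i, ε) = (σ i, -ε) := by
  simp only [tog, Function.Involutive.coe_toPerm]
  simp [cs.simple_mul_simple_self]

theorem tog_apply_ne (i : B) {w : W} (h : w ≠ σ i) (ε : ℤˣ) :
    tog cs i (w, ε) = (σ i * w * σ i, ε) := by
  simp only [tog, Function.Involutive.coe_toPerm]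
  rw [if_neg h]

open Classical in
/-- `-1` if the proposition holds, else `1`. -/
noncomputable def sg (c : Prop) : ℤˣ := if c then -1 else 1

theorem sg_pos {c : Prop} (h : c) : sg c = -1 := by simp [sg, h]

theorem sg_neg {c : Prop} (h : ¬ c) : sg c = 1 := by simp [sg, h]

/-- One step of the dihedral pair. -/
theorem tog_mul_tog_apply (i j : B) (w : W) (ε : ℤˣ) :
    (tog cs i * tog cs j) (w, ε) =
      (((σ i * σ j) * w) * (σ j * σ i),
        ε * sg (w = σ j) * sg (w = σ j * σ i * σ j)) := by
  rw [Equiv.Perm.mul_apply]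
  by_cases h1 : w = σ j
  · subst h1
    rw [tog_apply_eq]
    by_cases h2 : (σ j : W) = σ i
    · rw [h2, tog_apply_eq, sg_pos rfl, neg_neg,
        sg_pos (by simp [mul_assoc, cs.simple_mul_simple_cancel_left])]
      rw [Prod.mk.injEq]
      constructor
      · simp [mul_assoc, cs.simple_mul_simple_cancel_left, cs.simple_mul_simple_self, mul_one]
      · simp
    · rw [tog_apply_ne cs i (fun hc => h2 hc), sg_pos rfl,
        sg_neg (by
          intro hc
          rw [mul_assoc] at hc
          have h3 := mul_left_cancel ((mul_one (σ j)).trans hc)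
          have h4 : (σ i : W) = σ j := by
            simpa [cs.simple_mul_simple_cancel_left, mul_one] using
              congrArg (fun z => σ i * z) h3
          exact h2 h4.symm)]
      rw [Prod.mk.injEq]
      constructor
      · simp [mul_assoc, cs.simple_mul_simple_self, mul_one, cs.simple_mul_simple_cancel_left]
      · simp
  · rw [tog_apply_ne cs j h1]
    by_cases h2 : σ j * w * σ j = (σ i : W)
    · have h2' : w = σ j * σ i * σ j := by
        have := congrArg (fun z => σ j * z * σ j) h2
        simpa [mul_assoc, cs.simple_mul_simple_cancel_left,
          cs.simple_mul_simple_cancel_right] using this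
      rw [h2, tog_apply_eq, sg_neg h1, sg_pos h2']
      rw [Prod.mk.injEq]
      constructor
      · rw [h2']
        simp [mul_assoc, cs.simple_mul_simple_cancel_left]
      · simp
    · rw [tog_apply_ne cs i h2, sg_neg h1, sg_neg (by
        intro hc
        apply h2
        rw [hc]
        simp [mul_assoc, cs.simple_mul_simple_cancel_left, cs.simple_mul_simple_self, mul_one])]
      rw [Prod.mk.injEq]
      constructor
      · group
      · simp

theorem tog_mul_tog_pow_apply (i j : B) (n : ℕ) (w : W) (ε : ℤˣ) :
    ((tog cs i * tog cs j) ^ n) (w, ε) =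
      ((σ i * σ j) ^ n * w * (σ j * σ i) ^ n,
        ε * ∏ k ∈ Finset.range (2 * n), sg (w = (σ j * σ i) ^ k * σ j)) := by
  induction n generalizing w ε with
  | zero => simp
  | succ n ih =>
    have E : ∀ k : ℕ, (σ i * σ j) * ((σ j * σ i) ^ (k+2) * σ j) * (σ j * σ i) =
        (σ j * σ i) ^ k * σ j := by
      intro k
      have hb : (σ j * σ i) ^ (k+2) = (σ j * σ i) * ((σ j * σ i) ^ k * (σ j * σ i)) := by
        rw [pow_succ, pow_succ', mul_assoc]
      rw [hb]
      simp only [mul_assoc, cs.simple_mul_simple_cancel_left, cs.simple_mul_simple_self,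
        mul_one]
    have cond : ∀ k : ℕ,
        ((σ i * σ j) * w * (σ j * σ i) = (σ j * σ i) ^ k * σ j) =
        (w = (σ j * σ i) ^ (k+2) * σ j) := by
      intro k
      apply propext
      constructor
      · intro h
        have h2 := h.trans (E k).symm
        exact mul_left_cancel (mul_right_cancel h2)
      · intro h
        rw [h]
        exact E k
    rw [pow_succ, Equiv.Perm.mul_apply, tog_mul_tog_apply cs i j w ε, ih]
    rw [Prod.mk.injEq]
    constructor
    · rw [pow_succ (σ i * σ j), pow_succ' (σ j * σ i)]
      simp only [mul_assoc]
    · have h2n : 2 * (n + 1) = (2 * n + 1) + 1 := by ring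
      rw [h2n, Finset.prod_range_succ', Finset.prod_range_succ']
      have : ∀ k, sg ((σ i * σ j) * w * (σ j * σ i) = (σ j * σ i) ^ k * σ j)
          = sg (w = (σ j * σ i) ^ (k + 1 + 1) * σ j) := by
        intro k
        rw [cond k]
      rw [Finset.prod_congr rfl (fun k _ => this k)]
      simp only [pow_zero, one_mul, pow_one]
      have e1 : ((σ j * σ i : W) ^ 1 * σ j) = σ j * (σ i * σ j) := by
        rw [pow_one, mul_assoc]
      rw [e1]
      simp only [mul_assoc]
      ac_rfl

theorem tog_liftable : M.IsLiftable (fun i => tog cs (i : B) : B → Equiv.Perm (W × ℤˣ)) := by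
  intro i j
  apply Equiv.ext
  rintro ⟨w, ε⟩
  rw [tog_mul_tog_pow_apply, cs.simple_mul_simple_pow i j, cs.simple_mul_simple_pow' i j]
  have key : ∏ k ∈ Finset.range (2 * M i j), sg (w = (σ j * σ i) ^ k * σ j) = 1 := by
    have h2 : 2 * M i j = M i j + M i j := by ring
    rw [h2, Finset.prod_range_add]
    have : ∀ k, sg (w = (σ j * σ i) ^ (M i j + k) * σ j)
        = sg (w = (σ j * σ i) ^ k * σ j) := by
      intro k
      have hp : (σ j * σ i) ^ (M i j + k) = (σ j * σ i) ^ k := by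
        rw [pow_add, cs.simple_mul_simple_pow' i j, one_mul]
      rw [hp]
    rw [Finset.prod_congr rfl (fun k _ => this k)]
    exact Int.units_mul_self _
  rw [key, mul_one, one_mul, mul_one]
  rfl

/-- The reflection-cocycle permutation representation. -/
noncomputable def Phi : W →* Equiv.Perm (W × ℤˣ) :=
  cs.lift ⟨fun i => tog cs i, tog_liftable cs⟩

theorem Phi_simple (i : B) : Phi cs (σ i) = tog cs i := cs.lift_apply_simple _ i

/-- The sign cocycle. -/
noncomputable def eta (v t : W) : ℤˣ := (Phi cs v (t, 1)).2

theorem Phi_apply (v t : W) (ε : ℤˣ) :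
    Phi cs v (t, ε) = (v * t * v⁻¹, ε * eta cs v t) := by
  induction v using cs.simple_induction_right generalizing t ε with
  | one => simp [eta]
  | mul_simple_right v i ih =>
    have expand : ∀ (u : W) (δ : ℤˣ), Phi cs (v * σ i) (u, δ)
        = Phi cs v (tog cs i (u, δ)) := by
      intro u δ
      rw [map_mul, Phi_simple, Equiv.Perm.mul_apply]
    by_cases h : t = σ i
    · subst h
      rw [expand, tog_apply_eq, ih]
      have heta : eta cs (v * σ i) (σ i) = -eta cs v (σ i) := by
        rw [eta, expand, tog_apply_eq, ih]
        simp
      rw [heta, Prod.mk.injEq]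
      constructor
      · simp [mul_assoc, cs.simple_mul_simple_cancel_left]
      · simp [mul_comm]
    · rw [expand, tog_apply_ne cs i h, ih]
      have heta : eta cs (v * σ i) t = eta cs v (σ i * t * σ i) := by
        rw [eta, expand, tog_apply_ne cs i h, ih, one_mul]
      rw [heta, Prod.mk.injEq]
      constructor
      · simp [mul_assoc, mul_inv_rev, cs.inv_simple]
      · rfl

theorem eta_one (t : W) : eta cs 1 t = 1 := by simp [eta]

theorem eta_mul (u v t : W) : eta cs (u * v) t = eta cs v t * eta cs u (v * t * v⁻¹) := by
  have : Phi cs (u * v) (t, 1) = Phi cs u (Phi cs v (t, 1)) := by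
    rw [map_mul, Equiv.Perm.mul_apply]
  rw [eta, this, Phi_apply, Phi_apply, eta, one_mul]

theorem eta_simple (i : B) (t : W) : eta cs (σ i) t = sg (t = σ i) := by
  by_cases h : t = σ i
  · rw [eta, Phi_simple, sg_pos h, h, tog_apply_eq]
  · rw [eta, Phi_simple, sg_neg h, tog_apply_ne cs i h]

theorem eta_refl_self {t : W} (ht : cs.IsReflection t) : eta cs t t = -1 := by
  obtain ⟨u, i, rfl⟩ := ht
  have key : eta cs u⁻¹ (u * σ i * u⁻¹) * eta cs u (σ i) = 1 := by
    have h1 := eta_mul cs u u⁻¹ (u * σ i * u⁻¹)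
    have h2 : u⁻¹ * (u * σ i * u⁻¹) * (u⁻¹)⁻¹ = σ i := by group
    rw [mul_inv_cancel, eta_one, h2] at h1
    exact h1.symm
  have e1 : eta cs (u * (σ i * u⁻¹)) (u * σ i * u⁻¹)
      = eta cs (σ i * u⁻¹) (u * σ i * u⁻¹) * eta cs u
        ((σ i * u⁻¹) * (u * σ i * u⁻¹) * (σ i * u⁻¹)⁻¹) := eta_mul cs _ _ _
  have e2 : (σ i * u⁻¹) * (u * σ i * u⁻¹) * (σ i * u⁻¹)⁻¹ = σ i := by
    simp only [mul_inv_rev, inv_inv, cs.inv_simple]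
    simp only [mul_assoc, inv_mul_cancel_left, cs.simple_mul_simple_cancel_left]
  have e3 : eta cs (σ i * u⁻¹) (u * σ i * u⁻¹)
      = eta cs u⁻¹ (u * σ i * u⁻¹) * eta cs (σ i) (u⁻¹ * (u * σ i * u⁻¹) * (u⁻¹)⁻¹) :=
    eta_mul cs _ _ _
  have e4 : u⁻¹ * (u * σ i * u⁻¹) * (u⁻¹)⁻¹ = σ i := by group
  rw [← mul_assoc] at e1
  rw [e1, e2, e3, e4, eta_simple, sg_pos rfl]
  calc eta cs u⁻¹ (u * σ i * u⁻¹) * -1 * eta cs u (σ i)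
      = -(eta cs u⁻¹ (u * σ i * u⁻¹) * eta cs u (σ i)) := by
        rw [mul_neg_one, neg_mul]
    _ = -1 := by rw [key]

/-- Left-inversion indicator. -/
noncomputable def lsgn (w t : W) : ℤˣ := eta cs w⁻¹ t

theorem lsgn_one (t : W) : lsgn cs 1 t = 1 := by simp [lsgn, eta_one]

theorem lsgn_simple_mul (i : B) (w t : W) :
    lsgn cs (σ i * w) t = sg (t = σ i) * lsgn cs w (σ i * t * σ i) := by
  have h : (σ i * w)⁻¹ = w⁻¹ * σ i := by rw [mul_inv_rev, cs.inv_simple]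
  rw [lsgn, h, eta_mul, eta_simple, lsgn]
  congr 2
  rw [cs.inv_simple]

theorem lsgn_refl_mul {t : W} (ht : cs.IsReflection t) (w : W) :
    lsgn cs (t * w) t = -lsgn cs w t := by
  have h : (t * w)⁻¹ = w⁻¹ * t := by rw [mul_inv_rev, ht.inv]
  have h2 : t * t * t⁻¹ = t := by group
  rw [lsgn, h, eta_mul, eta_refl_self cs ht, h2, ← lsgn]
  exact neg_one_mul _

theorem lsgn_eq_one_of_lt {n : ℕ} : ∀ w t : W, ℓ w ≤ n → cs.IsReflection t →
    ℓ w < ℓ (t * w) → lsgn cs w t = 1 := by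
  induction n with
  | zero =>
    intro w t hw _ _
    have : w = 1 := cs.length_eq_zero_iff.mp (Nat.le_zero.mp hw)
    rw [this, lsgn_one]
  | succ n ih =>
    intro w t hw ht hlt
    by_cases hone : w = 1
    · rw [hone, lsgn_one]
    · obtain ⟨i, hi⟩ := cs.exists_leftDescent_of_ne_one hone
      have hi' : ℓ (σ i * w) < ℓ w := hi
      have hlen' : ℓ (σ i * w) + 1 = ℓ w := by
        rcases cs.length_simple_mul w i with h | h <;> omega
      by_cases hti : t = σ i
      · exfalso
        rw [hti] at hlt
        omega
      · have ht' : cs.IsReflection (σ i * t * σ i) := by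
          have := ht.conj (σ i)
          rwa [cs.inv_simple] at this
        have hwdec : lsgn cs w t = lsgn cs (σ i * (σ i * w)) t := by
          rw [cs.simple_mul_simple_cancel_left]
        rw [hwdec, lsgn_simple_mul, sg_neg hti, one_mul]
        apply ih _ _ (by omega) ht'
        have hassoc : σ i * t * σ i * (σ i * w) = σ i * (t * w) := by
          simp only [mul_assoc, cs.simple_mul_simple_cancel_left]
        rw [hassoc]
        have h1 : ℓ w < ℓ (t * w) := hlt
        rcases cs.length_simple_mul (t * w) i with h | h <;> omega

theorem lsgn_eq_neg_one_of_gt {w t : W} (ht : cs.IsReflection t)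
    (hlt : ℓ (t * w) < ℓ w) : lsgn cs w t = -1 := by
  have hwv : w = t * (t * w) := by rw [← mul_assoc, ht.mul_self, one_mul]
  have h1 : lsgn cs (t * w) t = 1 := by
    apply lsgn_eq_one_of_lt cs (t * w) t le_rfl ht
    rw [← hwv]
    exact hlt
  rw [hwv, lsgn_refl_mul cs ht, h1]

theorem exchange_of_lsgn : ∀ (ω : List B) (t : W), cs.IsReflection t →
    lsgn cs (π ω) t = -1 → ∃ j < ω.length, t * π ω = π (ω.eraseIdx j) := by
  intro ω
  induction ω with
  | nil =>
    intro t _ hsgn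
    rw [wordProd_nil, lsgn_one] at hsgn
    exact absurd hsgn (by decide)
  | cons i ω' ih =>
    intro t ht hsgn
    rw [cs.wordProd_cons] at hsgn ⊢
    by_cases hti : t = σ i
    · refine ⟨0, by simp, ?_⟩
      rw [hti, ← mul_assoc, cs.simple_mul_simple_self, one_mul, List.eraseIdx_cons_zero]
    · rw [lsgn_simple_mul, sg_neg hti, one_mul] at hsgn
      have ht' : cs.IsReflection (σ i * t * σ i) := by
        have := ht.conj (σ i)
        rwa [cs.inv_simple] at this
      obtain ⟨j, hj, hje⟩ := ih _ ht' hsgn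
      refine ⟨j + 1, by simpa using hj, ?_⟩
      rw [List.eraseIdx_cons_succ, cs.wordProd_cons, ← hje]
      simp only [← mul_assoc, cs.simple_mul_simple_self, one_mul]

/-- The (strong) exchange property. -/
theorem exchange {ω : List B} {t : W} (ht : cs.IsReflection t)
    (hlt : ℓ (t * π ω) < ℓ (π ω)) : ∃ j < ω.length, t * π ω = π (ω.eraseIdx j) :=
  exchange_of_lsgn cs ω t ht (lsgn_eq_neg_one_of_gt cs ht hlt)


theorem wordProd_mem_stSubgroup {s t : B} {ω : List B} (hω : ∀ u ∈ ω, u = s ∨ u = t) :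
    π ω ∈ stSubgroup cs s t := by
  induction ω with
  | nil =>
    rw [cs.wordProd_nil]
    exact one_mem _
  | cons i ω' ih =>
    rw [cs.wordProd_cons]
    refine mul_mem ?_ (ih fun u hu => hω u (List.mem_cons_of_mem _ hu))
    rcases hω i List.mem_cons_self with h | h <;> subst h
    · exact Subgroup.subset_closure (Set.mem_insert _ _)
    · exact Subgroup.subset_closure (Set.mem_insert_iff.mpr (Or.inr rfl))

theorem exists_word_of_mem_stSubgroup {s t : B} {g : W} (hg : g ∈ stSubgroup cs s t) :
    ∃ ω : List B, (∀ u ∈ ω, u = s ∨ u = t) ∧ π ω = g := by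
  induction hg using Subgroup.closure_induction with
  | mem x hx =>
    rcases Set.mem_insert_iff.mp hx with h | h
    · exact ⟨[s], by simp, by rw [cs.wordProd_singleton, h]⟩
    · rw [Set.mem_singleton_iff] at h
      exact ⟨[t], by simp, by rw [cs.wordProd_singleton, h]⟩
  | one => exact ⟨[], by simp, by simp⟩
  | mul x y hx hy ihx ihy =>
    obtain ⟨ω1, h1, e1⟩ := ihx
    obtain ⟨ω2, h2, e2⟩ := ihy
    refine ⟨ω1 ++ ω2, ?_, by rw [cs.wordProd_append, e1, e2]⟩
    intro u hu
    rcases List.mem_append.mp hu with h | h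
    exacts [h1 u h, h2 u h]
  | inv x hx ihx =>
    obtain ⟨ω1, h1, e1⟩ := ihx
    exact ⟨ω1.reverse, fun u hu => h1 u (List.mem_reverse.mp hu),
      by rw [cs.wordProd_reverse, e1]⟩

theorem exists_reduced_subword (ω : List B) :
    ∃ ω' : List B, cs.IsReduced ω' ∧ (∀ u ∈ ω', u ∈ ω) ∧ π ω' = π ω := by
  induction ω with
  | nil => exact ⟨[], by simp [CoxeterSystem.IsReduced], by simp, rfl⟩
  | cons i ω' ih =>
    obtain ⟨ω'', hred, hsub, heq⟩ := ih
    by_cases hr : cs.IsReduced (i :: ω'')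
    · refine ⟨i :: ω'', hr, ?_, by rw [cs.wordProd_cons, cs.wordProd_cons, heq]⟩
      intro u hu
      rcases List.mem_cons.mp hu with h | h
      · exact h ▸ (List.mem_cons_self : i ∈ i :: ω')
      · exact List.mem_cons_of_mem _ (hsub u h)
    · have hlt : ℓ (σ i * π ω'') < ℓ (π ω'') := by
        rcases cs.length_simple_mul (π ω'') i with h | h
        · exfalso
          apply hr
          show ℓ (π (i :: ω'')) = (i :: ω'').length
          rw [cs.wordProd_cons, h, hred]
          simp
        · have hred' : ℓ (π ω'') = ω''.length := hred
          omega
      obtain ⟨j, hj, hje⟩ := exchange cs (cs.isReflection_simple i) hlt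
      refine ⟨ω''.eraseIdx j, ?_, ?_, ?_⟩
      · show ℓ (π (ω''.eraseIdx j)) = (ω''.eraseIdx j).length
        rw [← hje]
        have h1 := List.length_eraseIdx_add_one hj
        have hred' : ℓ (π ω'') = ω''.length := hred
        rcases cs.length_simple_mul (π ω'') i with h | h <;> omega
      · intro u hu
        exact List.mem_cons_of_mem _ (hsub u ((List.eraseIdx_sublist ω'' j).subset hu))
      · rw [← hje, cs.wordProd_cons, heq]

theorem exists_reduced_word_alph {s t : B} {g : W} (hg : g ∈ stSubgroup cs s t) :
    ∃ ω, (∀ u ∈ ω, u = s ∨ u = t) ∧ cs.IsReduced ω ∧ π ω = g := by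
  obtain ⟨ω, hω, he⟩ := exists_word_of_mem_stSubgroup cs hg
  obtain ⟨ω', hred, hsub, heq⟩ := exists_reduced_subword cs ω
  exact ⟨ω', fun u hu => hω u (hsub u hu), hred, heq.trans he⟩

theorem simple_of_mem_st {s t : B} {g : W} (hg : g ∈ stSubgroup cs s t) (hl : ℓ g = 1) :
    g = σ s ∨ g = σ t := by
  obtain ⟨ω, halph, hred, rfl⟩ := exists_reduced_word_alph cs hg
  have hred' : ℓ (π ω) = ω.length := hred
  have hlen : ω.length = 1 := by omega
  obtain ⟨u, rfl⟩ := List.length_eq_one_iff.mp hlen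
  rw [cs.wordProd_singleton]
  rcases halph u (by simp) with rfl | rfl
  · exact Or.inl rfl
  · exact Or.inr rfl

theorem length_mul_of_mem_st {s t : B} : ∀ n (y : W), ℓ y ≤ n →
    ℓ y < ℓ (y * σ s) → ℓ y < ℓ (y * σ t) →
    ∀ g ∈ stSubgroup cs s t, ℓ (y * g) = ℓ y + ℓ g := by
  intro n
  induction n with
  | zero =>
    intro y hy _ _ g _
    have h1 : y = 1 := cs.length_eq_zero_iff.mp (Nat.le_zero.mp hy)
    subst h1
    simp
  | succ n ih =>
    intro y hy hys hyt g hg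
    by_cases hone : y = 1
    · subst hone
      simp
    · obtain ⟨i, hi⟩ := cs.exists_leftDescent_of_ne_one hone
      have hi' : ℓ (σ i * y) < ℓ y := hi
      have hlen : ℓ (σ i * y) + 1 = ℓ y := by
        rcases cs.length_simple_mul y i with h | h <;> omega
      have hy's : ℓ (σ i * y) < ℓ ((σ i * y) * σ s) := by
        have h1 : ℓ y < ℓ (y * σ s) := hys
        have h2 : σ i * y * σ s = σ i * (y * σ s) := by rw [mul_assoc]
        rw [h2]
        rcases cs.length_simple_mul (y * σ s) i with h | h <;> omega
      have hy't : ℓ (σ i * y) < ℓ ((σ i * y) * σ t) := by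
        have h1 : ℓ y < ℓ (y * σ t) := hyt
        have h2 : σ i * y * σ t = σ i * (y * σ t) := by rw [mul_assoc]
        rw [h2]
        rcases cs.length_simple_mul (y * σ t) i with h | h <;> omega
      have IH := ih (σ i * y) (by omega) hy's hy't g hg
      have hyig : y * g = σ i * (σ i * y * g) := by
        simp only [← mul_assoc, cs.simple_mul_simple_self, one_mul]
      rcases cs.length_simple_mul (σ i * y * g) i with h | h
      · rw [hyig, h, IH]
        omega
      · exfalso
        obtain ⟨ξ, hξred, hξ⟩ := cs.exists_reduced_word' (σ i * y)
        obtain ⟨ω, hωalph, hωred, hωeq⟩ := exists_reduced_word_alph cs hg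
        have hξred' : ℓ (π ξ) = ξ.length := hξred
        have hωred' : ℓ (π ω) = ω.length := hωred
        have happ : π (ξ ++ ω) = σ i * y * g := by
          rw [cs.wordProd_append, ← hξ, hωeq]
        have hlt2 : ℓ (σ i * π (ξ ++ ω)) < ℓ (π (ξ ++ ω)) := by
          rw [happ]
          omega
        obtain ⟨j, hj, hje⟩ := exchange cs (cs.isReflection_simple i) hlt2
        rw [List.length_append] at hj
        by_cases hjlt : j < ξ.length
        · rw [List.eraseIdx_append_of_lt_length hjlt ω] at hje
          rw [cs.wordProd_append, cs.wordProd_append] at hje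
          rw [← mul_assoc] at hje
          have hy : y = π (ξ.eraseIdx j) := by
            have h2 := mul_right_cancel hje
            rw [← hξ] at h2
            rw [← h2]
            simp only [← mul_assoc, cs.simple_mul_simple_self, one_mul]
          have hle := cs.length_wordProd_le (ξ.eraseIdx j)
          rw [← hy] at hle
          have h3 := List.length_eraseIdx_add_one hjlt
          have h4 : ξ.length = ℓ (σ i * y) := by rw [hξ, hξred']
          omega
        · push_neg at hjlt
          rw [List.eraseIdx_append_of_length_le hjlt ω] at hje
          rw [cs.wordProd_append, cs.wordProd_append, ← hξ, hωeq] at hje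
          have hg2 : π (ω.eraseIdx (j - ξ.length)) ∈ stSubgroup cs s t :=
            wordProd_mem_stSubgroup cs
              (fun u hu => hωalph u ((List.eraseIdx_sublist ω _).subset hu))
          have hw0mem : π (ω.eraseIdx (j - ξ.length)) * g⁻¹ ∈ stSubgroup cs s t :=
            mul_mem hg2 (inv_mem hg)
          have hyg2 : y * g = (σ i * y) * π (ω.eraseIdx (j - ξ.length)) := by
            rw [hyig, hje, mul_assoc]
          have hyw0 : y = (σ i * y) * (π (ω.eraseIdx (j - ξ.length)) * g⁻¹) := by
            have h5 := congrArg (fun z => z * g⁻¹) hyg2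
            simpa [mul_assoc] using h5
          have hl0 : ℓ (π (ω.eraseIdx (j - ξ.length)) * g⁻¹) = 1 := by
            have h6 := ih (σ i * y) (by omega) hy's hy't _ hw0mem
            rw [← hyw0] at h6
            omega
          rcases simple_of_mem_st cs hw0mem hl0 with h0 | h0
          · have hyw : y * σ s = σ i * y := by
              rw [← h0]
              conv_lhs => rw [hyw0]
              rw [mul_assoc, h0, cs.simple_mul_simple_self, mul_one]
            rw [hyw] at hys
            omega
          · have hyw : y * σ t = σ i * y := by
              rw [← h0]
              conv_lhs => rw [hyw0]
              rw [mul_assoc, h0, cs.simple_mul_simple_self, mul_one]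
            rw [hyw] at hyt
            omega

theorem length_st_mul_x {s t : B} {x : W}
    (hxs : ℓ x < ℓ (σ s * x)) (hxt : ℓ x < ℓ (σ t * x)) {g : W}
    (hg : g ∈ stSubgroup cs s t) : ℓ (g * x) = ℓ g + ℓ x := by
  have hinv : ∀ r : B, ℓ (x⁻¹ * σ r) = ℓ (σ r * x) := by
    intro r
    have h0 : (x⁻¹ * σ r)⁻¹ = σ r * x := by rw [mul_inv_rev, inv_inv, cs.inv_simple]
    calc ℓ (x⁻¹ * σ r) = ℓ ((x⁻¹ * σ r)⁻¹) := (cs.length_inv _).symm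
      _ = ℓ (σ r * x) := by rw [h0]
  have h1 : ℓ x⁻¹ < ℓ (x⁻¹ * σ s) := by rw [cs.length_inv, hinv]; exact hxs
  have h2 : ℓ x⁻¹ < ℓ (x⁻¹ * σ t) := by rw [cs.length_inv, hinv]; exact hxt
  have h3 := length_mul_of_mem_st cs (ℓ x⁻¹) x⁻¹ le_rfl h1 h2 g⁻¹ (inv_mem hg)
  have h4 : x⁻¹ * g⁻¹ = (g * x)⁻¹ := by rw [mul_inv_rev]
  rw [h4, cs.length_inv, cs.length_inv, cs.length_inv] at h3
  omega

theorem minRep_down {H : Set B} {w : W} {i : B} (hw : w ∈ minRep cs H)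
    (hlt : ℓ (σ i * w) < ℓ w) : σ i * w ∈ minRep cs H := by
  intro h hh
  have h1 : ℓ w < ℓ (w * σ h) := hw h hh
  have h2 : σ i * w * σ h = σ i * (w * σ h) := by rw [mul_assoc]
  rw [h2]
  rcases cs.length_simple_mul (w * σ h) i with h3 | h3 <;> omega

theorem deodhar {H : Set B} {w : W} {i : B} (hw : w ∈ minRep cs H)
    (hup : ℓ w < ℓ (σ i * w)) (hni : σ i * w ∉ minRep cs H) :
    ∃ h ∈ H, σ i * w = w * σ h := by
  have hex : ∃ h ∈ H, ¬ ℓ (σ i * w) < ℓ (σ i * w * σ h) := by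
    by_contra hc
    push_neg at hc
    exact hni (fun h hh => hc h hh)
  obtain ⟨h, hh, hint⟩ := hex
  push_neg at hint
  have hne := cs.length_mul_simple_ne (σ i * w) h
  have hlt : ℓ (σ i * w * σ h) < ℓ (σ i * w) := lt_of_le_of_ne hint hne
  obtain ⟨ξ, hξred, hξ⟩ := cs.exists_reduced_word' w
  have hξred' : ℓ (π ξ) = ξ.length := hξred
  have hwh : ℓ (w * σ h) = ℓ w + 1 := by
    have := hw h hh
    rcases cs.length_mul_simple w h with h3 | h3 <;> omega
  have h6 : ℓ (σ i * w) = ℓ w + 1 := by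
    rcases cs.length_simple_mul w i with h3 | h3 <;> omega
  have happ : π (ξ ++ [h]) = w * σ h := by
    rw [cs.wordProd_append, cs.wordProd_singleton, ← hξ]
  have hlt2 : ℓ (σ i * π (ξ ++ [h])) < ℓ (π (ξ ++ [h])) := by
    rw [happ]
    have h5 : ℓ (σ i * (w * σ h)) = ℓ (σ i * w * σ h) := by rw [mul_assoc]
    omega
  obtain ⟨j, hj, hje⟩ := exchange cs (cs.isReflection_simple i) hlt2
  rw [List.length_append, List.length_singleton] at hj
  by_cases hjlt : j < ξ.length
  · exfalso
    rw [List.eraseIdx_append_of_lt_length hjlt [h]] at hje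
    rw [cs.wordProd_append, cs.wordProd_append, cs.wordProd_singleton, ← mul_assoc] at hje
    have h7 := mul_right_cancel hje
    rw [← hξ] at h7
    have hle := cs.length_wordProd_le (ξ.eraseIdx j)
    rw [← h7] at hle
    have h8 := List.length_eraseIdx_add_one hjlt
    have hξlen : ℓ w = ξ.length := by rw [hξ]; exact hξred'
    omega
  · push_neg at hjlt
    have hj' : j = ξ.length := by omega
    subst hj'
    rw [List.eraseIdx_append_of_length_le le_rfl [h]] at hje
    simp only [Nat.sub_self, List.eraseIdx_cons_zero, List.append_nil] at hje
    rw [happ, ← hξ] at hje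
    refine ⟨h, hh, ?_⟩
    have h9 := congrArg (fun z => z * σ h) hje
    simpa [mul_assoc, cs.simple_mul_simple_self, mul_one] using h9

theorem stepDown {H : Set B} {s t : B} {x : W}
    (hxs : ℓ x < ℓ (σ s * x)) (hxt : ℓ x < ℓ (σ t * x)) :
    ∀ ω : List B, (∀ u ∈ ω, u = s ∨ u = t) → cs.IsReduced ω →
    π ω * x ∈ minRep cs H → π ω.tail * x ∈ minRep cs H := by
  intro ω halph hred hmem
  cases ω with
  | nil => simpa using hmem
  | cons i ω' =>
    simp only [List.tail_cons]
    have hmem1 : π ω' ∈ stSubgroup cs s t :=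
      wordProd_mem_stSubgroup cs (fun u hu => halph u (List.mem_cons_of_mem _ hu))
    have hmem0 : π (i :: ω') ∈ stSubgroup cs s t := wordProd_mem_stSubgroup cs halph
    have hadd0 := length_st_mul_x cs hxs hxt hmem0
    have hadd1 := length_st_mul_x cs hxs hxt hmem1
    have hred1 : cs.IsReduced ω' := by simpa using hred.drop 1
    have hr1 : ℓ (π ω') = ω'.length := hred1
    have hr0 : ℓ (π (i :: ω')) = ω'.length + 1 := by simpa using hred.eq
    have kk : π ω' * x = σ i * (π (i :: ω') * x) := by
      rw [cs.wordProd_cons]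
      simp only [← mul_assoc, cs.simple_mul_simple_self, one_mul]
    rw [kk]
    apply minRep_down cs hmem
    rw [← kk]
    omega

theorem fullChain {H : Set B} {s t : B} {x : W}
    (hxs : ℓ x < ℓ (σ s * x)) (hxt : ℓ x < ℓ (σ t * x)) :
    ∀ (n : ℕ) (ω : List B), (∀ u ∈ ω, u = s ∨ u = t) → cs.IsReduced ω →
    π ω * x ∈ minRep cs H → π (ω.drop n) * x ∈ minRep cs H := by
  intro n
  induction n with
  | zero =>
    intro ω h1 h2 h3
    simpa using h3
  | succ n ih =>
    intro ω h1 h2 h3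
    rw [← List.tail_drop]
    exact stepDown cs hxs hxt (ω.drop n) (fun u hu => h1 u (List.drop_subset n ω hu))
      (h2.drop n) (ih ω h1 h2 h3)

theorem x_mem_of_coset_mem {H : Set B} {s t : B} {x : W}
    (hxs : ℓ x < ℓ (σ s * x)) (hxt : ℓ x < ℓ (σ t * x)) {g : W}
    (hg : g ∈ stSubgroup cs s t) (hmem : g * x ∈ minRep cs H) : x ∈ minRep cs H := by
  obtain ⟨ω, halph, hred, hfeq⟩ := exists_reduced_word_alph cs hg
  have := fullChain cs hxs hxt ω.length ω halph hred (by rw [hfeq]; exact hmem)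
  simpa using this

theorem lastLetter {H : Set B} {s t : B} {x : W}
    (hxs : ℓ x < ℓ (σ s * x)) (hxt : ℓ x < ℓ (σ t * x)) :
    ∀ ω : List B, ω ≠ [] → (∀ u ∈ ω, u = s ∨ u = t) → cs.IsReduced ω →
    π ω * x ∈ minRep cs H → ∃ u, (u = s ∨ u = t) ∧ σ u * x ∈ minRep cs H := by
  intro ω
  induction ω with
  | nil => intro h; exact absurd rfl h
  | cons i ω' ih =>
    intro _ halph hred hmem
    cases ω' with
    | nil =>
      refine ⟨i, halph i (by simp), ?_⟩
      have := hmem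
      rw [cs.wordProd_singleton] at this
      exact this
    | cons a l =>
      have hstep := stepDown cs hxs hxt (i :: a :: l) halph hred hmem
      exact ih (by simp) (fun u hu => halph u (List.mem_cons_of_mem _ hu))
        (by simpa using hred.drop 1) (by simpa using hstep)

theorem extend {H : Set B} {s t : B} {x : W}
    (hxs : ℓ x < ℓ (σ s * x)) (hxt : ℓ x < ℓ (σ t * x)) (hxm : x ∈ minRep cs H)
    {g' : W} (hg' : g' ∈ stSubgroup cs s t) {i : B} (hσi : σ i ∈ stSubgroup cs s t)
    (hmem : g' * x ∈ minRep cs H) (hup : ℓ (σ i * g') = ℓ g' + 1)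
    (hnot : σ i * g' * x ∉ minRep cs H) :
    (σ i * g' = g' * σ s ∧ σ s * x ∉ minRep cs H) ∨
    (σ i * g' = g' * σ t ∧ σ t * x ∉ minRep cs H) := by
  have hig' : σ i * g' ∈ stSubgroup cs s t := mul_mem hσi hg'
  have ha1 := length_st_mul_x cs hxs hxt hg'
  have ha2 := length_st_mul_x cs hxs hxt hig'
  have hup2 : ℓ (g' * x) < ℓ (σ i * (g' * x)) := by
    rw [← mul_assoc]
    omega
  have hnot2 : σ i * (g' * x) ∉ minRep cs H := by rw [← mul_assoc]; exact hnot
  obtain ⟨h, hh, hde⟩ := deodhar cs hmem hup2 hnot2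
  have hw0mem : g'⁻¹ * σ i * g' ∈ stSubgroup cs s t :=
    mul_mem (mul_mem (inv_mem hg') hσi) hg'
  have he1 : (g'⁻¹ * σ i * g') * x = x * σ h := by
    have h5 := congrArg (fun z => g'⁻¹ * z) hde
    simpa [mul_assoc] using h5
  have hxh : ℓ (x * σ h) = ℓ x + 1 := by
    have := hxm h hh
    rcases cs.length_mul_simple x h with h3 | h3 <;> omega
  have hl1 : ℓ (g'⁻¹ * σ i * g') = 1 := by
    have h6 := length_st_mul_x cs hxs hxt hw0mem
    rw [he1] at h6
    omega
  have hκ : ∀ w0 : W, g'⁻¹ * σ i * g' = w0 → σ i * g' = g' * w0 := by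
    intro w0 hw0
    rw [← hw0]
    simp [mul_assoc]
  have hnotmem : ∀ w0 : W, g'⁻¹ * σ i * g' = w0 → w0 * x ∉ minRep cs H := by
    intro w0 hw0 hcon
    have hwx : w0 * x = x * σ h := by rw [← hw0]; exact he1
    have h7 := hcon h hh
    rw [hwx, mul_assoc, cs.simple_mul_simple_self, mul_one] at h7
    omega
  rcases simple_of_mem_st cs hw0mem hl1 with h0 | h0
  · exact Or.inl ⟨hκ _ h0, hnotmem _ h0⟩
  · exact Or.inr ⟨hκ _ h0, hnotmem _ h0⟩

theorem caseC {H : Set B} {s t : B} {x : W}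
    (hxs : ℓ x < ℓ (σ s * x)) (hxt : ℓ x < ℓ (σ t * x)) (hxm : x ∈ minRep cs H)
    (hbs : σ s * x ∈ minRep cs H) (hbt : σ t * x ∈ minRep cs H) :
    ∀ ω : List B, (∀ u ∈ ω, u = s ∨ u = t) → cs.IsReduced ω → π ω * x ∈ minRep cs H := by
  intro ω
  induction ω with
  | nil =>
    intro _ _
    simpa using hxm
  | cons i ω' ih =>
    intro halph hred
    have halph' : ∀ u ∈ ω', u = s ∨ u = t := fun u hu => halph u (List.mem_cons_of_mem _ hu)
    have hred' : cs.IsReduced ω' := by simpa using hred.drop 1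
    have hg' := wordProd_mem_stSubgroup cs halph'
    have hmem := ih halph' hred'
    by_contra hnot
    have hσi : σ i ∈ stSubgroup cs s t := by
      rcases halph i List.mem_cons_self with rfl | rfl
      · exact Subgroup.subset_closure (Set.mem_insert _ _)
      · exact Subgroup.subset_closure (Set.mem_insert_iff.mpr (Or.inr rfl))
    have hup : ℓ (σ i * π ω') = ℓ (π ω') + 1 := by
      have h0 : ℓ (π (i :: ω')) = ω'.length + 1 := by simpa using hred.eq
      have h1 : ℓ (π ω') = ω'.length := hred'
      rw [cs.wordProd_cons] at h0
      omega
    have hnot' : σ i * π ω' * x ∉ minRep cs H := by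
      intro hcon
      exact hnot (by rw [cs.wordProd_cons]; exact hcon)
    rcases extend cs hxs hxt hxm hg' hσi hmem hup hnot' with ⟨_, hc⟩ | ⟨_, hc⟩
    · exact hc hbs
    · exact hc hbt

theorem caseD_up {H : Set B} {s t : B} {x : W}
    (hxs : ℓ x < ℓ (σ s * x)) (hxt : ℓ x < ℓ (σ t * x)) (hxm : x ∈ minRep cs H)
    (hbs : σ s * x ∈ minRep cs H) (hbt : σ t * x ∉ minRep cs H) :
    ∀ ω : List B, (∀ u ∈ ω, u = s ∨ u = t) → cs.IsReduced ω →
    ℓ (π ω) < ℓ (π ω * σ t) → π ω * x ∈ minRep cs H := by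
  intro ω
  induction ω with
  | nil =>
    intro _ _ _
    simpa using hxm
  | cons i ω' ih =>
    intro halph hred hlt
    have halph' : ∀ u ∈ ω', u = s ∨ u = t := fun u hu => halph u (List.mem_cons_of_mem _ hu)
    have hred' : cs.IsReduced ω' := by simpa using hred.drop 1
    have hg' := wordProd_mem_stSubgroup cs halph'
    have hσi : σ i ∈ stSubgroup cs s t := by
      rcases halph i List.mem_cons_self with rfl | rfl
      · exact Subgroup.subset_closure (Set.mem_insert _ _)
      · exact Subgroup.subset_closure (Set.mem_insert_iff.mpr (Or.inr rfl))
    have hup : ℓ (σ i * π ω') = ℓ (π ω') + 1 := by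
      have h0 : ℓ (π (i :: ω')) = ω'.length + 1 := by simpa using hred.eq
      have h1 : ℓ (π ω') = ω'.length := hred'
      rw [cs.wordProd_cons] at h0
      omega
    have hlt' : ℓ (π ω') < ℓ (π ω' * σ t) := by
      by_contra hc
      push_neg at hc
      have hne := cs.length_mul_simple_ne (π ω') t
      have hlt3 : ℓ (π ω' * σ t) < ℓ (π ω') := lt_of_le_of_ne hc hne
      have h4 : π (i :: ω') * σ t = σ i * (π ω' * σ t) := by
        rw [cs.wordProd_cons, mul_assoc]
      rw [h4] at hlt
      rw [cs.wordProd_cons] at hlt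
      rcases cs.length_simple_mul (π ω' * σ t) i with h5 | h5 <;> omega
    have hmem := ih halph' hred' hlt'
    by_contra hnot
    have hnot' : σ i * π ω' * x ∉ minRep cs H := by
      intro hcon
      exact hnot (by rw [cs.wordProd_cons]; exact hcon)
    rcases extend cs hxs hxt hxm hg' hσi hmem hup hnot' with ⟨_, hc⟩ | ⟨heq, _⟩
    · exact hc hbs
    · have hgt : π (i :: ω') * σ t = π ω' := by
        rw [cs.wordProd_cons, heq, mul_assoc, cs.simple_mul_simple_self, mul_one]
      rw [hgt] at hlt
      rw [cs.wordProd_cons] at hlt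
      omega

theorem caseD_down {H : Set B} {s t : B} {x : W}
    (hxs : ℓ x < ℓ (σ s * x)) (hxt : ℓ x < ℓ (σ t * x))
    (hbt : σ t * x ∉ minRep cs H)
    {g : W} (hg : g ∈ stSubgroup cs s t) (hmem : g * x ∈ minRep cs H) :
    ℓ g < ℓ (g * σ t) := by
  by_contra hc
  push_neg at hc
  have hne := cs.length_mul_simple_ne g t
  have hlt : ℓ (g * σ t) < ℓ g := lt_of_le_of_ne hc hne
  have hg2 : g * σ t ∈ stSubgroup cs s t :=
    mul_mem hg (Subgroup.subset_closure (Set.mem_insert_iff.mpr (Or.inr rfl)))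
  obtain ⟨ω2, halph2, hred2, heq2⟩ := exists_reduced_word_alph cs hg2
  have halph : ∀ u ∈ ω2 ++ [t], u = s ∨ u = t := by
    intro u hu
    rcases List.mem_append.mp hu with h | h
    · exact halph2 u h
    · simp only [List.mem_singleton] at h
      exact Or.inr h
  have heq : π (ω2 ++ [t]) = g := by
    rw [cs.wordProd_append, cs.wordProd_singleton, heq2, mul_assoc,
      cs.simple_mul_simple_self, mul_one]
  have hred : cs.IsReduced (ω2 ++ [t]) := by
    show ℓ (π (ω2 ++ [t])) = _
    rw [heq, List.length_append, List.length_singleton]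
    have h1 : ℓ (π ω2) = ω2.length := hred2
    rw [heq2] at h1
    rcases cs.length_mul_simple g t with h2 | h2 <;> omega
  have hch := fullChain cs hxs hxt ω2.length (ω2 ++ [t]) halph hred
    (by rw [heq]; exact hmem)
  rw [List.drop_left, cs.wordProd_singleton] at hch
  exact hbt hch

end Aux

/-- Proposition `partizione`: for `x ∈ ^{{s,t}}W`, the
intersection `(W_{{s,t}}·x) ∩ W^H` is one of: the empty set, the singleton `{x}`,
the elements `g·x` with `t` not a right descent of `g`, the elements `g·x` with `s`
not a right descent of `g`, or the whole coset. -/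
theorem coset_inter_minRep_classification
    {B : Type*} {W : Type*} [Group W] {M : CoxeterMatrix B} (cs : CoxeterSystem M W)
    (H : Set B) (s t : B) (x : W) (hx : x ∈ minRepLeft cs {s, t}) :
    ((fun g => g * x) '' (stSubgroup cs s t : Set W)) ∩ minRep cs H = ∅ ∨
    ((fun g => g * x) '' (stSubgroup cs s t : Set W)) ∩ minRep cs H = {x} ∨
    ((fun g => g * x) '' (stSubgroup cs s t : Set W)) ∩ minRep cs H =
      {y | ∃ g ∈ stSubgroup cs s t,
        cs.length g < cs.length (g * cs.simple t) ∧ y = g * x} ∨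
    ((fun g => g * x) '' (stSubgroup cs s t : Set W)) ∩ minRep cs H =
      {y | ∃ g ∈ stSubgroup cs s t,
        cs.length g < cs.length (g * cs.simple s) ∧ y = g * x} ∨
    ((fun g => g * x) '' (stSubgroup cs s t : Set W)) ∩ minRep cs H =
      (fun g => g * x) '' (stSubgroup cs s t : Set W) := by
  have hxs : cs.length x < cs.length (cs.simple s * x) := hx s (Set.mem_insert _ _)
  have hxt : cs.length x < cs.length (cs.simple t * x) :=
    hx t (Set.mem_insert_iff.mpr (Or.inr rfl))
  by_cases hxm : x ∈ minRep cs H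
  · by_cases hbs : cs.simple s * x ∈ minRep cs H
    · by_cases hbt : cs.simple t * x ∈ minRep cs H
      · -- whole coset
        refine Or.inr (Or.inr (Or.inr (Or.inr ?_)))
        apply Set.inter_eq_left.mpr
        rintro y ⟨g, hg, rfl⟩
        obtain ⟨ω, halph, hred, hfeq⟩ := exists_reduced_word_alph cs hg
        show g * x ∈ minRep cs H
        rw [← hfeq]
        exact caseC cs hxs hxt hxm hbs hbt ω halph hred
      · -- option 3
        refine Or.inr (Or.inr (Or.inl ?_))
        ext y
        constructor
        · rintro ⟨⟨g, hg, rfl⟩, hymem⟩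
          exact ⟨g, hg, caseD_down cs hxs hxt hbt hg hymem, rfl⟩
        · rintro ⟨g, hg, hlt, rfl⟩
          refine ⟨⟨g, hg, rfl⟩, ?_⟩
          obtain ⟨ω, halph, hred, hfeq⟩ := exists_reduced_word_alph cs hg
          show g * x ∈ minRep cs H
          rw [← hfeq]
          exact caseD_up cs hxs hxt hxm hbs hbt ω halph hred
            (by rw [hfeq]; exact hlt)
    · have hcomm : stSubgroup cs s t = stSubgroup cs t s := by
        unfold stSubgroup
        rw [Set.pair_comm]
      by_cases hbt : cs.simple t * x ∈ minRep cs H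
      · -- option 4
        refine Or.inr (Or.inr (Or.inr (Or.inl ?_)))
        ext y
        constructor
        · rintro ⟨⟨g, hg, rfl⟩, hymem⟩
          exact ⟨g, hg, caseD_down cs hxt hxs hbs (hcomm ▸ hg) hymem, rfl⟩
        · rintro ⟨g, hg, hlt, rfl⟩
          refine ⟨⟨g, hg, rfl⟩, ?_⟩
          obtain ⟨ω, halph, hred, hfeq⟩ :=
            exists_reduced_word_alph cs (show g ∈ stSubgroup cs t s from hcomm ▸ hg)
          show g * x ∈ minRep cs H
          rw [← hfeq]
          exact caseD_up cs hxt hxs hxm hbt hbs ω halph hred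
            (by rw [hfeq]; exact hlt)
      · -- singleton
        refine Or.inr (Or.inl ?_)
        ext y
        constructor
        · rintro ⟨⟨g, hg, rfl⟩, hymem⟩
          obtain ⟨ω, halph, hred, hfeq⟩ := exists_reduced_word_alph cs hg
          by_cases hω : ω = []
          · subst hω
            have : g = 1 := by
              rw [← hfeq, cs.wordProd_nil]
            show g * x ∈ ({x} : Set W)
            rw [this, one_mul]
            exact Set.mem_singleton x
          · exfalso
            obtain ⟨u, hu, hmem⟩ := lastLetter cs hxs hxt ω hω halph hred
              (by rw [hfeq]; exact hymem)
            rcases hu with rfl | rfl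
            · exact hbs hmem
            · exact hbt hmem
        · intro hy
          rw [Set.mem_singleton_iff] at hy
          subst hy
          exact ⟨⟨1, one_mem _, by simp⟩, hxm⟩
  · -- empty
    refine Or.inl ?_
    apply Set.eq_empty_iff_forall_notMem.mpr
    rintro y ⟨⟨g, hg, rfl⟩, hymem⟩
    exact hxm (x_mem_of_coset_mem cs hxs hxt hg hymem)

end CIKL
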